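/- Let A be a finite type, β > 0 a real, and π_ref : A → ℝ a probability mass function with π_ref(a) > 0 for all a. Let Adv : A → ℝ satisfy ∑_a π_ref(a)·Adv(a) = 0. Suppose π⁺ : A → ℝ minimizes L(π) = (1/2)·∑_a π_ref(a)·(Adv(a)/β − log(π(a)/π_ref(a)))² over all probability mass functions π with π(a) > 0 for all a. Then ∑_a π⁺(a)·(Adv(a) − β·log(π⁺(a)/π_ref(a))) ≥ β·∑_a π_ref(a)·log(π_ref(a)/π⁺(a)), i.e., the one-step improvement of π⁺ over π_ref is bounded below by β times the Kullback–Leibler divergence KL(π_ref ‖ π⁺). -/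

import Mathlib

/-- Remark after Theorem 1: when the exploratory action distribution equals `πref`
itself, the one-step improvement of the DAPO minimizer `πplus` over `πref` is bounded
below by `β` times the KL divergence `KL(πref ‖ πplus)`. -/
theorem dapo_improvement_ge_kl {A : Type*} [Fintype A] (β : ℝ) (hβ : 0 < β)
    (πref : A → ℝ) (hrefpos : ∀ a, 0 < πref a) (hrefsum : ∑ a, πref a = 1)
    (Adv : A → ℝ) (hmean : ∑ a, πref a * Adv a = 0)
    (πplus : A → ℝ) (hpluspos : ∀ a, 0 < πplus a) (hplussum : ∑ a, πplus a = 1)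
    (hmin : ∀ π : A → ℝ, (∀ a, 0 < π a) → ∑ a, π a = 1 →
      (1 / 2) * ∑ a, πref a * (Adv a / β - Real.log (πplus a / πref a)) ^ 2 ≤
        (1 / 2) * ∑ a, πref a * (Adv a / β - Real.log (π a / πref a)) ^ 2) :
    β * ∑ a, πref a * Real.log (πref a / πplus a) ≤
      ∑ a, πplus a * (Adv a - β * Real.log (πplus a / πref a)) := by
  classical
  set g : A → ℝ := fun a => Adv a / β - Real.log (πplus a / πref a) with hgdef
  set c : ℝ := ∑ a, πref a * g a with hcdef
  set m : ℝ := ∑ a, πplus a * g a with hmdef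
  set S : ℝ := ∑ a, πref a * g a ^ 2 with hSdef
  have hβ' : β ≠ 0 := ne_of_gt hβ
  -- c equals the KL divergence KL(πref ‖ πplus)
  have hcKL : c = ∑ a, πref a * Real.log (πref a / πplus a) := by
    have h1 : ∀ a, πref a * g a =
        (πref a * Adv a) / β + πref a * Real.log (πref a / πplus a) := by
      intro a
      have hlog : Real.log (πplus a / πref a) = - Real.log (πref a / πplus a) := by
        rw [Real.log_div (ne_of_gt (hpluspos a)) (ne_of_gt (hrefpos a)),
          Real.log_div (ne_of_gt (hrefpos a)) (ne_of_gt (hpluspos a))]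
        ring
      simp only [hgdef, hlog]
      ring
    rw [hcdef, Finset.sum_congr rfl fun a _ => h1 a, Finset.sum_add_distrib,
      ← Finset.sum_div, hmean]
    simp
  -- KL nonnegativity : 0 ≤ c
  have hc0 : 0 ≤ c := by
    rw [hcKL]
    have key : ∀ a, πref a - πplus a ≤ πref a * Real.log (πref a / πplus a) := by
      intro a
      have hlog : Real.log (πplus a / πref a) ≤ πplus a / πref a - 1 :=
        Real.log_le_sub_one_of_pos (div_pos (hpluspos a) (hrefpos a))
      have hlog' : Real.log (πplus a / πref a) = - Real.log (πref a / πplus a) := by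
        rw [Real.log_div (ne_of_gt (hpluspos a)) (ne_of_gt (hrefpos a)),
          Real.log_div (ne_of_gt (hrefpos a)) (ne_of_gt (hpluspos a))]
        ring
      rw [hlog'] at hlog
      have := mul_le_mul_of_nonneg_left hlog (le_of_lt (hrefpos a))
      have hfield : πref a * (πplus a / πref a - 1) = πplus a - πref a := by
        rw [mul_sub, mul_one, mul_div_cancel₀ _ (ne_of_gt (hrefpos a))]
      nlinarith [hrefpos a]
    calc (0 : ℝ) = ∑ a, (πref a - πplus a) := by
          rw [Finset.sum_sub_distrib, hrefsum, hplussum]; ring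
      _ ≤ ∑ a, πref a * Real.log (πref a / πplus a) :=
          Finset.sum_le_sum fun a _ => key a
  -- The partition function of the exponential perturbation family
  set Z : ℝ → ℝ := fun t => ∑ a, πplus a * Real.exp (t * g a) with hZdef
  have hZpos : ∀ t, 0 < Z t := by
    intro t
    have hne : Nonempty A := by
      by_contra h
      rw [not_nonempty_iff] at h
      simp [Finset.univ_eq_empty] at hrefsum
    exact Finset.sum_pos (fun a _ => mul_pos (hpluspos a) (Real.exp_pos _))
      Finset.univ_nonempty
  have hZ0 : Z 0 = 1 := by simp [hZdef, hplussum]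
  -- derivative of Z at 0 is m
  have hZderiv : HasDerivAt Z m 0 := by
    have h : ∀ a : A, HasDerivAt (fun t : ℝ => πplus a * Real.exp (t * g a))
        (πplus a * g a) 0 := by
      intro a
      have h1 : HasDerivAt (fun t : ℝ => t * g a) (g a) 0 := by
        simpa using (hasDerivAt_id (0 : ℝ)).mul_const (g a)
      have h2 := h1.exp
      simpa using h2.const_mul (πplus a)
    have := HasDerivAt.fun_sum (fun a (_ : a ∈ Finset.univ) => h a)
    simpa [hmdef] using this
  -- objective along the perturbation family
  set F : ℝ → ℝ := fun t => (1 / 2) * ∑ a, πref a * ((1 - t) * g a + Real.log (Z t)) ^ 2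
    with hFdef
  -- F has a global minimum at 0
  have hFmin : ∀ t, F 0 ≤ F t := by
    intro t
    set π : A → ℝ := fun a => πplus a * Real.exp (t * g a) / Z t with hπdef
    have hπpos : ∀ a, 0 < π a :=
      fun a => div_pos (mul_pos (hpluspos a) (Real.exp_pos _)) (hZpos t)
    have hπsum : ∑ a, π a = 1 := by
      rw [hπdef, ← Finset.sum_div]
      exact div_self (ne_of_gt (hZpos t))
    have hrw : ∀ a, Adv a / β - Real.log (π a / πref a) =
        (1 - t) * g a + Real.log (Z t) := by
      intro a
      have h1 : π a / πref a = (πplus a / πref a) * Real.exp (t * g a) / Z t := by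
        rw [hπdef]; field_simp
      rw [h1, Real.log_div (ne_of_gt (mul_pos (div_pos (hpluspos a) (hrefpos a))
          (Real.exp_pos _))) (ne_of_gt (hZpos t)),
        Real.log_mul (ne_of_gt (div_pos (hpluspos a) (hrefpos a)))
          (ne_of_gt (Real.exp_pos _)), Real.log_exp]
      simp only [hgdef]
      ring
    have := hmin π hπpos hπsum
    calc F 0 = (1 / 2) * ∑ a, πref a * (Adv a / β - Real.log (πplus a / πref a)) ^ 2 := by
          simp [hFdef, hZ0, hgdef]
      _ ≤ (1 / 2) * ∑ a, πref a * (Adv a / β - Real.log (π a / πref a)) ^ 2 := this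
      _ = F t := by
          rw [hFdef]
          congr 1
          exact Finset.sum_congr rfl fun a _ => by rw [hrw a]
  -- derivative of F at 0
  have hFderiv : HasDerivAt F ((1 / 2) * ∑ a, πref a * (2 * g a * (m - g a))) 0 := by
    have hlogZ : HasDerivAt (fun t => Real.log (Z t)) m 0 := by
      have := hZderiv.log (by rw [hZ0]; norm_num)
      simpa [hZ0] using this
    have hterm : ∀ a : A, HasDerivAt
        (fun t => πref a * ((1 - t) * g a + Real.log (Z t)) ^ 2)
        (πref a * (2 * g a * (m - g a))) 0 := by
      intro a
      have h1 : HasDerivAt (fun t : ℝ => (1 - t) * g a) (-g a) 0 := by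
        have := ((hasDerivAt_const (0:ℝ) (1:ℝ)).sub (hasDerivAt_id (0:ℝ))).mul_const (g a)
        simpa using this
      have h2 : HasDerivAt (fun t => (1 - t) * g a + Real.log (Z t)) (-g a + m) 0 :=
        h1.add hlogZ
      have h3 := (h2.fun_pow 2).const_mul (πref a)
      have hval : (1 - (0:ℝ)) * g a + Real.log (Z 0) = g a := by simp [hZ0]
      rw [hval] at h3
      refine h3.congr_deriv ?_
      push_cast
      ring
    have := HasDerivAt.fun_sum (fun a (_ : a ∈ Finset.univ) => hterm a)
    exact this.const_mul (1 / 2)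
  -- first-order condition : S = c * m
  have hstat : S = c * m := by
    have hloc : IsLocalMin F 0 := Filter.Eventually.of_forall fun t => hFmin t
    have := hloc.hasDerivAt_eq_zero hFderiv
    have hexp : (1 / 2) * ∑ a, πref a * (2 * g a * (m - g a)) =
        (∑ a, πref a * g a) * m - S := by
      rw [hSdef, Finset.sum_mul, ← Finset.sum_sub_distrib, Finset.mul_sum]
      exact Finset.sum_congr rfl fun a _ => by ring
    rw [hexp, ← hcdef] at this
    linarith
  -- Cauchy–Schwarz : c ^ 2 ≤ S
  have hCS : c ^ 2 ≤ S := by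
    have := Finset.sum_mul_sq_le_sq_mul_sq Finset.univ
      (fun a => Real.sqrt (πref a)) (fun a => Real.sqrt (πref a) * g a)
    have h1 : ∀ a : A, Real.sqrt (πref a) * (Real.sqrt (πref a) * g a) = πref a * g a := by
      intro a
      rw [← mul_assoc, Real.mul_self_sqrt (le_of_lt (hrefpos a))]
    have h2 : ∀ a : A, Real.sqrt (πref a) ^ 2 = πref a :=
      fun a => Real.sq_sqrt (le_of_lt (hrefpos a))
    have h3 : ∀ a : A, (Real.sqrt (πref a) * g a) ^ 2 = πref a * g a ^ 2 := by
      intro a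
      rw [mul_pow, h2 a]
    simp only [h1, h2, h3] at this
    rw [hrefsum, one_mul] at this
    simpa [hcdef, hSdef] using this
  -- conclude c ≤ m
  have hcm : c ≤ m := by
    rcases eq_or_lt_of_le hc0 with h | h
    · -- c = 0 : then S = 0, so g ≡ 0, so m = 0
      have hS0 : S = 0 := by rw [hstat, ← h]; ring
      have hterm0 : ∀ a ∈ Finset.univ, πref a * g a ^ 2 = 0 := by
        intro a _
        have hnn : ∀ b ∈ (Finset.univ : Finset A), 0 ≤ πref b * g b ^ 2 :=
          fun b _ => mul_nonneg (le_of_lt (hrefpos b)) (sq_nonneg _)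
        exact (Finset.sum_eq_zero_iff_of_nonneg hnn).mp hS0 a (Finset.mem_univ a)
      have hg0 : ∀ a, g a = 0 := by
        intro a
        have := hterm0 a (Finset.mem_univ a)
        have hπne : πref a ≠ 0 := ne_of_gt (hrefpos a)
        have : g a ^ 2 = 0 := by
          rcases mul_eq_zero.mp this with h' | h'
          · exact absurd h' hπne
          · exact h'
        exact pow_eq_zero_iff (n := 2) (by norm_num) |>.mp this
      have : m = 0 := by
        rw [hmdef]
        exact Finset.sum_eq_zero fun a _ => by rw [hg0 a, mul_zero]
      rw [this, ← h]
    · -- c > 0 : from c² ≤ S = c·m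
      have : c * c ≤ c * m := by
        calc c * c = c ^ 2 := by ring
          _ ≤ S := hCS
          _ = c * m := hstat
      exact le_of_mul_le_mul_left this h
  -- translate the goal
  have hRHS : ∑ a, πplus a * (Adv a - β * Real.log (πplus a / πref a)) = β * m := by
    rw [hmdef, Finset.mul_sum]
    refine Finset.sum_congr rfl fun a _ => ?_
    simp only [hgdef]
    field_simp
  rw [hRHS, ← hcKL]
  exact mul_le_mul_of_nonneg_left hcm (le_of_lt hβ)
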